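/- Let p > 1 and let (U, V) be nonnegative C² solutions on ℝ of (|U'|^{p-2}U')' = V^pU^{p-1}, (|V'|^{p-2}V')' = U^pV^{p-1} with U, V > 0, |U'|^p + |V'|^p - U^pV^p = T with T > 0. If U' > 0 and V' < 0 everywhere, then U' and V' are bounded: there exists C with |U'(x)| + |V'(x)| ≤ C for all x. -/

import Mathlib

open Real Filter

private lemma stmt14_sq_sq_le {a b c : ℝ} (ha : 0 < a) (hb : 0 < b)
    (h1 : a ≤ c) (h2 : b ≤ c) : a ^ 2 * b ^ 2 ≤ c ^ 4 := by
  have h3 : a * b ≤ c * c := mul_le_mul h1 h2 hb.le (ha.le.trans h1)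
  nlinarith [mul_pos ha hb]

theorem stmt14 (p T : ℝ) (hp : 1 < p) (hT : 0 < T) (U V : ℝ → ℝ)
    (hU : ContDiff ℝ 2 U) (hV : ContDiff ℝ 2 V)
    (hUpos : ∀ x, 0 < U x) (hVpos : ∀ x, 0 < V x)
    (hUe : ∀ x, HasDerivAt (fun y => |deriv U y| ^ (p - 2) * deriv U y)
      (V x ^ p * U x ^ (p - 1)) x)
    (hVe : ∀ x, HasDerivAt (fun y => |deriv V y| ^ (p - 2) * deriv V y)
      (U x ^ p * V x ^ (p - 1)) x)
    (hU' : ∀ x, 0 < deriv U x) (hV' : ∀ x, deriv V x < 0)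
    (hen : ∀ x, |deriv U x| ^ p + |deriv V x| ^ p - U x ^ p * V x ^ p = T) :
    ∃ C : ℝ, ∀ x, |deriv U x| + |deriv V x| ≤ C := by
  have hUd : Differentiable ℝ U := hU.differentiable (by norm_num)
  have hVd : Differentiable ℝ V := hV.differentiable (by norm_num)
  have hp0 : 0 < p := lt_trans one_pos hp
  have hp1 : 0 < p - 1 := by linarith
  rcases eq_or_ne p 2 with hp2 | hp2
  · -- p = 2 case
    subst hp2
    have rp2 : ∀ a : ℝ, a ^ (2:ℝ) = a ^ 2 := fun a => by
      rw [show (2:ℝ) = ((2:ℕ):ℝ) by norm_num, Real.rpow_natCast]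
    have hU2 : ∀ x, HasDerivAt (deriv U) (V x ^ 2 * U x) x := by
      intro x
      have h := hUe x
      simp only [show (2:ℝ) - 2 = 0 by norm_num, show (2:ℝ) - 1 = 1 by norm_num,
        Real.rpow_zero, one_mul, Real.rpow_one, rp2] at h
      exact h
    have hV2 : ∀ x, HasDerivAt (deriv V) (U x ^ 2 * V x) x := by
      intro x
      have h := hVe x
      simp only [show (2:ℝ) - 2 = 0 by norm_num, show (2:ℝ) - 1 = 1 by norm_num,
        Real.rpow_zero, one_mul, Real.rpow_one, rp2] at h
      exact h
    have hen2 : ∀ x, deriv U x ^ 2 + deriv V x ^ 2 - U x ^ 2 * V x ^ 2 = T := by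
      intro x
      have h := hen x
      simp only [rp2, sq_abs] at h
      exact h
    set G : ℝ → ℝ := fun x => -(deriv U x * deriv V x)
      + (deriv U x ^ 2 + deriv V x ^ 2) / 2 with hGdef
    have hG : ∀ x, HasDerivAt G
        (U x * V x * (deriv U x - deriv V x) * (V x - U x)) x := by
      intro x
      have h := (((hU2 x).mul (hV2 x)).neg).add
        ((((hU2 x).pow 2).add ((hV2 x).pow 2)).div_const 2)
      convert h using 1
      · rfl
      · rfl
      · rfl
      push_cast
      norm_num
      ring
    have hGd : ∀ x, DifferentiableAt ℝ G x := fun x => (hG x).differentiableAt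
    have hGderiv : ∀ x, deriv G x = U x * V x * (deriv U x - deriv V x) * (V x - U x) :=
      fun x => (hG x).deriv
    have hDanti : Antitone (fun x => V x - U x) := by
      apply (strictAnti_of_deriv_neg ?_).antitone
      intro x
      rw [deriv_fun_sub (hVd x) (hUd x)]
      linarith [hU' x, hV' x]
    have hVanti : Antitone V := (strictAnti_of_deriv_neg hV').antitone
    have hUmono : Monotone U := (strictMono_of_deriv_pos hU').monotone
    have hGc : Continuous G := Differentiable.continuous (fun x => hGd x)
    have monoDown : ∀ a b : ℝ, a ≤ b → V a - U a ≤ 0 → G b ≤ G a := by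
      intro a b hab hDneg
      have hmono := antitoneOn_of_deriv_nonpos (convex_Icc a b) hGc.continuousOn
        (fun x _ => (hGd x).differentiableWithinAt) ?_
      · exact hmono ⟨le_refl a, hab⟩ ⟨hab, le_refl b⟩ hab
      · intro y hy
        rw [interior_Icc] at hy
        rw [hGderiv y]
        have h1 : V y - U y ≤ 0 := le_trans (hDanti hy.1.le) hDneg
        have h2 : 0 < U y * V y * (deriv U y - deriv V y) :=
          mul_pos (mul_pos (hUpos y) (hVpos y)) (by linarith [hU' y, hV' y])
        nlinarith
    have monoUp : ∀ a b : ℝ, a ≤ b → 0 ≤ V b - U b → G a ≤ G b := by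
      intro a b hab hDpos
      have hmono := monotoneOn_of_deriv_nonneg (convex_Icc a b) hGc.continuousOn
        (fun x _ => (hGd x).differentiableWithinAt) ?_
      · exact hmono ⟨le_refl a, hab⟩ ⟨hab, le_refl b⟩ hab
      · intro y hy
        rw [interior_Icc] at hy
        rw [hGderiv y]
        have h1 : 0 ≤ V y - U y := le_trans hDpos (hDanti hy.2.le)
        have h2 : 0 < U y * V y * (deriv U y - deriv V y) :=
          mul_pos (mul_pos (hUpos y) (hVpos y)) (by linarith [hU' y, hV' y])
        nlinarith
    have Gbound : ∀ a, G a ≤ T + U a ^ 2 * V a ^ 2 := by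
      intro a
      have h := hen2 a
      simp only [hGdef]
      nlinarith [sq_nonneg (deriv U a + deriv V a)]
    have hGK : ∀ x, G x ≤ max (G 0) (max (T + V 0 ^ 4) (T + U 0 ^ 4)) := by
      intro x
      rcases le_total 0 x with hx | hx
      · rcases le_or_gt (V 0 - U 0) 0 with h0 | h0
        · exact (monoDown 0 x hx h0).trans (le_max_left _ _)
        · rcases le_or_gt 0 (V x - U x) with hxD | hxD
          · have h1 : V x ≤ V 0 := hVanti hx
            have h4 : T + U x ^ 2 * V x ^ 2 ≤ T + V 0 ^ 4 := by
              have := stmt14_sq_sq_le (hUpos x) (hVpos x)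
                (show U x ≤ V 0 by linarith) (show V x ≤ V 0 by linarith)
              linarith
            exact ((Gbound x).trans h4).trans
              ((le_max_left _ _).trans (le_max_right _ _))
          · obtain ⟨a, ha, hDa⟩ := intermediate_value_Icc' hx
              ((hVd.continuous.sub hUd.continuous).continuousOn) ⟨hxD.le, h0.le⟩
            have h1 : V a ≤ V 0 := hVanti ha.1
            have hDa' : V a - U a = 0 := hDa
            have h4 : T + U a ^ 2 * V a ^ 2 ≤ T + V 0 ^ 4 := by
              have := stmt14_sq_sq_le (hUpos a) (hVpos a)
                (show U a ≤ V 0 by linarith) (show V a ≤ V 0 by linarith)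
              linarith
            exact (((monoDown a x ha.2 hDa.le).trans (Gbound a)).trans h4).trans
              ((le_max_left _ _).trans (le_max_right _ _))
      · rcases le_or_gt 0 (V 0 - U 0) with h0 | h0
        · exact (monoUp x 0 hx h0).trans (le_max_left _ _)
        · rcases le_or_gt (V x - U x) 0 with hxD | hxD
          · have h1 : U x ≤ U 0 := hUmono hx
            have h4 : T + U x ^ 2 * V x ^ 2 ≤ T + U 0 ^ 4 := by
              have := stmt14_sq_sq_le (hUpos x) (hVpos x)
                (show U x ≤ U 0 by linarith) (show V x ≤ U 0 by linarith)
              linarith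
            exact ((Gbound x).trans h4).trans
              ((le_max_right _ _).trans (le_max_right _ _))
          · obtain ⟨a, ha, hDa⟩ := intermediate_value_Icc' hx
              ((hVd.continuous.sub hUd.continuous).continuousOn) ⟨h0.le, hxD.le⟩
            have h1 : U a ≤ U 0 := hUmono ha.2
            have hDa' : V a - U a = 0 := hDa
            have h4 : T + U a ^ 2 * V a ^ 2 ≤ T + U 0 ^ 4 := by
              have := stmt14_sq_sq_le (hUpos a) (hVpos a)
                (show U a ≤ U 0 by linarith) (show V a ≤ U 0 by linarith)
              linarith
            exact (((monoUp x a ha.1 hDa.ge).trans (Gbound a)).trans h4).trans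
              ((le_max_right _ _).trans (le_max_right _ _))
    set K : ℝ := max (G 0) (max (T + V 0 ^ 4) (T + U 0 ^ 4)) with hKdef
    have hK0 : 0 ≤ K := le_trans (by positivity : (0:ℝ) ≤ T + V 0 ^ 4)
      ((le_max_left _ _).trans (le_max_right _ _))
    refine ⟨2 * Real.sqrt K, fun x => ?_⟩
    have h1 := hGK x
    have h2 : deriv U x ^ 2 + deriv V x ^ 2 ≤ 2 * K := by
      have h3 : 0 ≤ -(deriv U x * deriv V x) := by nlinarith [hU' x, hV' x]
      simp only [hGdef] at h1
      linarith
    have h4 : (|deriv U x| + |deriv V x|) ^ 2 ≤ (2 * Real.sqrt K) ^ 2 := by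
      rw [mul_pow, Real.sq_sqrt hK0]
      nlinarith [sq_nonneg (|deriv U x| - |deriv V x|), sq_abs (deriv U x),
        sq_abs (deriv V x)]
    have h5 := Real.sqrt_le_sqrt h4
    rwa [Real.sqrt_sq (by positivity), Real.sqrt_sq (by positivity)] at h5
  · -- p ≠ 2 case: UV is constant
    set q : ℝ := p / (p - 1) with hqdef
    have hqq : q * (p - 1) = p := by rw [hqdef]; field_simp
    have hqp : q - p ≠ 0 := by
      intro h
      apply hp2
      have hqe : q = p := by linarith
      rw [hqe] at hqq
      nlinarith
    -- rewrite the flux functions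
    have hA : (fun y => |deriv U y| ^ (p - 2) * deriv U y)
        = (fun y => deriv U y ^ (p - 1)) := by
      funext y
      rw [abs_of_pos (hU' y), ← Real.rpow_add_one (hU' y).ne', show p - 2 + 1 = p - 1 by ring]
    have hB : (fun y => |deriv V y| ^ (p - 2) * deriv V y)
        = (fun y => -(|deriv V y| ^ (p - 1))) := by
      funext y
      have hvne : (-(deriv V y)) ≠ 0 := ne_of_gt (neg_pos.2 (hV' y))
      rw [abs_of_neg (hV' y), show p - 1 = p - 2 + 1 by ring, Real.rpow_add_one hvne]
      ring
    have hAe : ∀ x, HasDerivAt (fun y => deriv U y ^ (p - 1))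
        (V x ^ p * U x ^ (p - 1)) x := fun x => hA ▸ hUe x
    have hBe : ∀ x, HasDerivAt (fun y => |deriv V y| ^ (p - 1))
        (-(U x ^ p * V x ^ (p - 1))) x := by
      intro x
      have h := hB ▸ hVe x
      simpa using h.fun_neg
    -- derivative of |U'|^p
    have hf1 : ∀ x, HasDerivAt (fun y => |deriv U y| ^ p)
        (V x ^ p * U x ^ (p - 1) * q * deriv U x) x := by
      intro x
      have h := (hAe x).rpow_const (p := q) (Or.inl (ne_of_gt (Real.rpow_pos_of_pos (hU' x) _)))
      have hfun : (fun y => (deriv U y ^ (p - 1)) ^ q) = fun y => |deriv U y| ^ p := by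
        funext y
        rw [abs_of_pos (hU' y), ← Real.rpow_mul (hU' y).le]
        congr 1
        linear_combination hqq
      have hexp : (deriv U x ^ (p - 1)) ^ (q - 1) = deriv U x := by
        rw [← Real.rpow_mul (hU' x).le, show (p - 1) * (q - 1) = 1 by linear_combination hqq,
          Real.rpow_one]
      rw [hfun, hexp] at h
      exact h
    have hf2 : ∀ x, HasDerivAt (fun y => |deriv V y| ^ p)
        (U x ^ p * V x ^ (p - 1) * q * deriv V x) x := by
      intro x
      have hvpos : 0 < |deriv V x| := abs_pos.2 (hV' x).ne
      have h := (hBe x).rpow_const (p := q) (Or.inl (ne_of_gt (Real.rpow_pos_of_pos hvpos _)))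
      have hfun : (fun y => (|deriv V y| ^ (p - 1)) ^ q) = fun y => |deriv V y| ^ p := by
        funext y
        rw [← Real.rpow_mul (abs_nonneg _)]
        congr 1
        linear_combination hqq
      have hexp : (|deriv V x| ^ (p - 1)) ^ (q - 1) = |deriv V x| := by
        rw [← Real.rpow_mul (abs_nonneg _), show (p - 1) * (q - 1) = 1 by linear_combination hqq,
          Real.rpow_one]
      rw [hfun, hexp] at h
      rw [abs_of_neg (hV' x)] at h
      convert h using 1
      ring
    -- derivative of U^p * V^p
    have hUp : ∀ x, HasDerivAt (fun y => U y ^ p)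
        (deriv U x * p * U x ^ (p - 1)) x := fun x =>
      ((hUd x).hasDerivAt).rpow_const (Or.inl (hUpos x).ne')
    have hVp : ∀ x, HasDerivAt (fun y => V y ^ p)
        (deriv V x * p * V x ^ (p - 1)) x := fun x =>
      ((hVd x).hasDerivAt).rpow_const (Or.inl (hVpos x).ne')
    -- the energy is constant, so its derivative vanishes
    have hkey : ∀ x, deriv U x * V x + deriv V x * U x = 0 := by
      intro x
      have hE : HasDerivAt (fun y => |deriv U y| ^ p + |deriv V y| ^ p - U y ^ p * V y ^ p)
          (V x ^ p * U x ^ (p - 1) * q * deriv U x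
            + U x ^ p * V x ^ (p - 1) * q * deriv V x
            - (deriv U x * p * U x ^ (p - 1) * V x ^ p
              + U x ^ p * (deriv V x * p * V x ^ (p - 1)))) x :=
        ((hf1 x).add (hf2 x)).sub ((hUp x).mul (hVp x))
      have hEc : (fun y => |deriv U y| ^ p + |deriv V y| ^ p - U y ^ p * V y ^ p)
          = (fun _ : ℝ => T) := funext hen
      rw [hEc] at hE
      have hzero := hE.unique (hasDerivAt_const x T)
      -- rewrite U^p = U^{p-1} * U, V^p = V^{p-1} * V
      have hup : U x ^ p = U x ^ (p - 1) * U x := by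
        rw [← Real.rpow_add_one (hUpos x).ne', show p - 1 + 1 = p by ring]
      have hvp : V x ^ p = V x ^ (p - 1) * V x := by
        rw [← Real.rpow_add_one (hVpos x).ne', show p - 1 + 1 = p by ring]
      rw [hup, hvp] at hzero
      have hfac : (q - p) * (U x ^ (p - 1) * V x ^ (p - 1))
          * (deriv U x * V x + deriv V x * U x) = 0 := by
        rw [← hzero]; ring
      have hpos : 0 < U x ^ (p - 1) * V x ^ (p - 1) :=
        mul_pos (Real.rpow_pos_of_pos (hUpos x) _) (Real.rpow_pos_of_pos (hVpos x) _)
      rcases mul_eq_zero.1 hfac with h | h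
      · rcases mul_eq_zero.1 h with h' | h'
        · exact absurd h' hqp
        · exact absurd h' hpos.ne'
      · exact h
    -- UV is constant
    have hUVd : Differentiable ℝ (fun x => U x * V x) := hUd.mul hVd
    have hUVderiv : ∀ x, deriv (fun x => U x * V x) x = 0 := by
      intro x
      have h := (((hUd x).hasDerivAt).fun_mul ((hVd x).hasDerivAt)).deriv
      rw [h]
      have := hkey x
      linarith
    have hUVconst := is_const_of_deriv_eq_zero hUVd hUVderiv
    set M : ℝ := T + (U 0 * V 0) ^ p with hMdef
    have hM0 : 0 ≤ M := by
      have : 0 < (U 0 * V 0) ^ p := Real.rpow_pos_of_pos (mul_pos (hUpos 0) (hVpos 0)) _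
      linarith
    have hbound : ∀ (f : ℝ → ℝ), (∀ x, |deriv f x| ^ p ≤ M) →
        ∀ x, |deriv f x| ≤ M ^ (1 / p) := by
      intro f hf x
      have h1 : |deriv f x| = (|deriv f x| ^ p) ^ (1 / p) := by
        rw [← Real.rpow_mul (abs_nonneg _), mul_one_div_cancel hp0.ne', Real.rpow_one]
      rw [h1]
      exact Real.rpow_le_rpow (Real.rpow_nonneg (abs_nonneg _) _) (hf x)
        (by positivity)
    have hUVx : ∀ x, U x ^ p * V x ^ p = (U 0 * V 0) ^ p := by
      intro x
      rw [← Real.mul_rpow (hUpos x).le (hVpos x).le, hUVconst x 0]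
    have hCU : ∀ x, |deriv U x| ^ p ≤ M := by
      intro x
      have h := hen x
      have h2 : 0 ≤ |deriv V x| ^ p := Real.rpow_nonneg (abs_nonneg _) _
      rw [hUVx x] at h
      linarith
    have hCV : ∀ x, |deriv V x| ^ p ≤ M := by
      intro x
      have h := hen x
      have h2 : 0 ≤ |deriv U x| ^ p := Real.rpow_nonneg (abs_nonneg _) _
      rw [hUVx x] at h
      linarith
    exact ⟨M ^ (1 / p) + M ^ (1 / p), fun x =>
      add_le_add (hbound U hCU x) (hbound V hCV x)⟩
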